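/- (Safety of the unicycle under the transformation-based HOCBF constraint, where both controls appear.) Let r > 0 and r_b > 0. Along any solution of the unicycle model, suppose the initial conditions D(0) − (r + r_b) ≥ 0 and D'(0) + D(0) − (r + r_b) ≥ 0 hold, and suppose that for all t ≥ 0 the controls satisfy the transformed HOCBF constraint (P/(M·D))·u₂ + (d·Q/D)·u₁ + (v·(v + φ·Q) + d·φ·(d·φ − φ·P))/D − (v·P + d·φ·Q)²/D³ + 2·(v·P + d·φ·Q)/D + D − (r + r_b) ≥ 0 (all functions evaluated at t). Then D(t) ≥ r + r_b for all t ≥ 0; consequently, for every t ≥ 0, every point of the plane within distance r_b of the geometric center (X(t), Y(t)) lies at distance at least r from the obstacle center (x₀, y₀). -/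

import Mathlib

private lemma unicycle_aux_eq (P Q Dt v φ u₁ u₂ d M r rb : ℝ)
    (hD : Dt ≠ 0) (hM : M ≠ 0) :
    P / (M * Dt) * u₂ + d * Q / Dt * u₁
        + (v * (v + φ * Q) + d * φ * (d * φ - φ * P)) / Dt
        - (v * P + d * φ * Q) ^ 2 / Dt ^ 3
        + 2 * ((v * P + d * φ * Q) / Dt)
        + Dt - (r + rb) =
    ((u₂ / M * P + v * (v + φ * Q) + d * u₁ * Q + d * φ * (d * φ - φ * P)) / Dt
      - (v * P + d * φ * Q) ^ 2 / Dt ^ 3 + (v * P + d * φ * Q) / Dt)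
    + ((v * P + d * φ * Q) / Dt + (Dt - (r + rb))) := by
  field_simp
  ring

/-- Safety of the unicycle under the transformation-based HOCBF constraint,
where both controls appear: `D t ≥ r + r_b` for all `t ≥ 0`, and hence every
point within distance `r_b` of the geometric center stays at distance at
least `r` from the obstacle center. -/
theorem unicycle_safety_transformed_hocbf
    (r rb : ℝ) (hr : 0 < r) (hrb : 0 < rb)
    (M : ℝ) (hM : 0 < M)
    (x y v θ φ u₁ u₂ : ℝ → ℝ)
    (hx : Differentiable ℝ x) (hy : Differentiable ℝ y)
    (hv : Differentiable ℝ v) (hθ : Differentiable ℝ θ)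
    (hφ : Differentiable ℝ φ)
    (hu₁ : Continuous u₁) (hu₂ : Continuous u₂)
    (hdx : ∀ t, deriv x t = v t * Real.cos (θ t))
    (hdy : ∀ t, deriv y t = v t * Real.sin (θ t))
    (hdv : ∀ t, deriv v t = u₂ t / M)
    (hdθ : ∀ t, deriv θ t = φ t)
    (hdφ : ∀ t, deriv φ t = u₁ t)
    (d : ℝ) (hd : 0 < d)
    (x₀ y₀ : ℝ) (X Y D P Q : ℝ → ℝ)
    (hX : ∀ t, X t = x t + d * Real.cos (θ t))
    (hY : ∀ t, Y t = y t + d * Real.sin (θ t))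
    (hD : ∀ t, D t = Real.sqrt ((X t - x₀) ^ 2 + (Y t - y₀) ^ 2))
    (hP : ∀ t, P t = (X t - x₀) * Real.cos (θ t) + (Y t - y₀) * Real.sin (θ t))
    (hQ : ∀ t, Q t = -(X t - x₀) * Real.sin (θ t) + (Y t - y₀) * Real.cos (θ t))
    (hDpos : ∀ t, 0 < D t)
    (hinit0 : D 0 - (r + rb) ≥ 0)
    (hinit1 : deriv D 0 + D 0 - (r + rb) ≥ 0)
    (hconstr : ∀ t : ℝ, 0 ≤ t →
      (P t / (M * D t)) * u₂ t + (d * Q t / D t) * u₁ t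
        + (v t * (v t + φ t * Q t)
            + d * φ t * (d * φ t - φ t * P t)) / D t
        - (v t * P t + d * φ t * Q t) ^ 2 / (D t) ^ 3
        + 2 * ((v t * P t + d * φ t * Q t) / D t)
        + D t - (r + rb) ≥ 0) :
    (∀ t : ℝ, 0 ≤ t → D t ≥ r + rb) ∧
      ∀ t : ℝ, 0 ≤ t → ∀ px py : ℝ,
        Real.sqrt ((px - X t) ^ 2 + (py - Y t) ^ 2) ≤ rb →
        Real.sqrt ((px - x₀) ^ 2 + (py - y₀) ^ 2) ≥ r := by
  have hDne : ∀ t, D t ≠ 0 := fun t => (hDpos t).ne'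
  -- derivatives of X and Y
  have hXd : ∀ t, HasDerivAt X (v t * Real.cos (θ t) - d * (φ t * Real.sin (θ t))) t := by
    intro t
    have hXeq : X = fun s => x s + d * Real.cos (θ s) := funext hX
    have h1 : HasDerivAt x (v t * Real.cos (θ t)) t := by
      have := (hx t).hasDerivAt; rwa [hdx t] at this
    have h2 : HasDerivAt (fun s => d * Real.cos (θ s))
        (d * (-Real.sin (θ t) * φ t)) t := by
      have := ((hθ t).hasDerivAt.cos).const_mul d
      rwa [hdθ t] at this
    have := h1.add h2
    rw [hXeq]
    refine this.congr_deriv (Eq.symm ?_)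
    ring
  have hYd : ∀ t, HasDerivAt Y (v t * Real.sin (θ t) + d * (φ t * Real.cos (θ t))) t := by
    intro t
    have hYeq : Y = fun s => y s + d * Real.sin (θ s) := funext hY
    have h1 : HasDerivAt y (v t * Real.sin (θ t)) t := by
      have := (hy t).hasDerivAt; rwa [hdy t] at this
    have h2 : HasDerivAt (fun s => d * Real.sin (θ s))
        (d * (Real.cos (θ t) * φ t)) t := by
      have := ((hθ t).hasDerivAt.sin).const_mul d
      rwa [hdθ t] at this
    have := h1.add h2
    rw [hYeq]
    refine this.congr_deriv (Eq.symm ?_)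
    ring
  have hθd : ∀ t, HasDerivAt θ (φ t) t := by
    intro t; have := (hθ t).hasDerivAt; rwa [hdθ t] at this
  -- derivative of D
  set N : ℝ → ℝ := fun t => v t * P t + d * φ t * Q t with hN
  have hsqrtS : ∀ t, Real.sqrt ((X t - x₀) ^ 2 + (Y t - y₀) ^ 2) = D t :=
    fun t => (hD t).symm
  have hSpos : ∀ t, 0 < (X t - x₀) ^ 2 + (Y t - y₀) ^ 2 := by
    intro t
    have h1 : 0 < Real.sqrt ((X t - x₀) ^ 2 + (Y t - y₀) ^ 2) := by
      rw [hsqrtS]; exact hDpos t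
    exact Real.sqrt_pos.mp h1
  have hDd : ∀ t, HasDerivAt D (N t / D t) t := by
    intro t
    have hDeq : D = fun s => Real.sqrt ((X s - x₀) ^ 2 + (Y s - y₀) ^ 2) := funext hD
    have hS : HasDerivAt (fun s => (X s - x₀) ^ 2 + (Y s - y₀) ^ 2)
        (2 * (X t - x₀) * (v t * Real.cos (θ t) - d * (φ t * Real.sin (θ t)))
          + 2 * (Y t - y₀) * (v t * Real.sin (θ t) + d * (φ t * Real.cos (θ t)))) t := by
      have h1 := (((hXd t).sub_const x₀).pow 2)
      have h2 := (((hYd t).sub_const y₀).pow 2)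
      have := h1.add h2
      refine this.congr_deriv (Eq.symm ?_)
      push_cast; ring
    have hsq := hS.sqrt (hSpos t).ne'
    rw [hsqrtS t] at hsq
    rw [hDeq]
    convert hsq using 1
    simp only [hsqrtS]
    rw [div_eq_div_iff (hDne t) (mul_ne_zero two_ne_zero (hDne t)), hN]
    simp only [hP t, hQ t]
    ring
  -- derivatives of P and Q
  have hPd : ∀ t, HasDerivAt P (v t + φ t * Q t) t := by
    intro t
    have hPeq : P = fun s => (X s - x₀) * Real.cos (θ s) + (Y s - y₀) * Real.sin (θ s) :=
      funext hP
    have h1 := (((hXd t).sub_const x₀).mul (hθd t).cos).add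
      (((hYd t).sub_const y₀).mul (hθd t).sin)
    rw [hPeq]
    refine h1.congr_deriv (Eq.symm ?_)
    simp only [hQ t]
    linear_combination (-(v t)) * (Real.sin_sq_add_cos_sq (θ t))
  have hQd : ∀ t, HasDerivAt Q (d * φ t - φ t * P t) t := by
    intro t
    have hQeq : Q = fun s => -(X s - x₀) * Real.sin (θ s) + (Y s - y₀) * Real.cos (θ s) :=
      funext hQ
    have h1 := ((((hXd t).sub_const x₀).neg).mul (hθd t).sin).add
      (((hYd t).sub_const y₀).mul (hθd t).cos)
    rw [hQeq]
    have h2 : (fun s => -(X s - x₀) * Real.sin (θ s) + (Y s - y₀) * Real.cos (θ s))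
        = fun s => (-(X s - x₀)) * Real.sin (θ s) + (Y s - y₀) * Real.cos (θ s) := by
      funext s; ring
    rw [h2]
    refine h1.congr_deriv (Eq.symm ?_)
    simp only [hP t, Pi.neg_apply]
    linear_combination (-(d * φ t)) * (Real.sin_sq_add_cos_sq (θ t))
  have hvd : ∀ t, HasDerivAt v (u₂ t / M) t := by
    intro t; have := (hv t).hasDerivAt; rwa [hdv t] at this
  have hφd : ∀ t, HasDerivAt φ (u₁ t) t := by
    intro t; have := (hφ t).hasDerivAt; rwa [hdφ t] at this
  -- derivative of N
  set N' : ℝ → ℝ := fun t => u₂ t / M * P t + v t * (v t + φ t * Q t)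
      + d * u₁ t * Q t + d * φ t * (d * φ t - φ t * P t) with hN'def
  have hNd : ∀ t, HasDerivAt N (N' t) t := by
    intro t
    have h1 := ((hvd t).mul (hPd t)).add (((hφd t).const_mul d).mul (hQd t))
    have h2 : N = fun s => v s * P s + d * φ s * Q s := rfl
    rw [h2]
    refine h1.congr_deriv (Eq.symm ?_)
    simp only [hN'def]
    ring
  -- second derivative of D
  set E : ℝ → ℝ := fun t => N' t / D t - N t ^ 2 / (D t) ^ 3 with hEdef
  have hD2 : ∀ t, HasDerivAt (fun s => N s / D s) (E t) t := by
    intro t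
    have h1 := (hNd t).div (hDd t) (hDne t)
    refine h1.congr_deriv (Eq.symm ?_)
    simp only [hEdef]
    field_simp [hDne t]
  -- ψ = D' + D - (r+rb)
  set ψ : ℝ → ℝ := fun s => N s / D s + (D s - (r + rb)) with hψdef
  have hψd : ∀ t, HasDerivAt ψ (E t + N t / D t) t := by
    intro t
    exact (hD2 t).add ((hDd t).sub_const (r + rb))
  have key : ∀ t, 0 ≤ t → 0 ≤ (E t + N t / D t) + ψ t := by
    intro t ht
    have h := hconstr t ht
    have heq : P t / (M * D t) * u₂ t + d * Q t / D t * u₁ t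
        + (v t * (v t + φ t * Q t) + d * φ t * (d * φ t - φ t * P t)) / D t
        - (v t * P t + d * φ t * Q t) ^ 2 / (D t) ^ 3
        + 2 * ((v t * P t + d * φ t * Q t) / D t)
        + D t - (r + rb) = (E t + N t / D t) + ψ t := by
      simp only [hEdef, hψdef, hN'def, hN]
      exact unicycle_aux_eq (P t) (Q t) (D t) (v t) (φ t) (u₁ t) (u₂ t) d M r rb
        (hDne t) hM.ne'
    rw [heq] at h
    linarith
  -- Gronwall step 1: ψ ≥ 0 on [0,∞)
  have hψ0 : 0 ≤ ψ 0 := by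
    have hd0 : deriv D 0 = N 0 / D 0 := (hDd 0).deriv
    simp only [hψdef]
    linarith [hinit1, hd0]
  have hψnn : ∀ t, 0 ≤ t → 0 ≤ ψ t := by
    intro t ht
    set f : ℝ → ℝ := fun s => Real.exp s * ψ s with hfdef
    have hfd : ∀ s, HasDerivAt f (Real.exp s * ψ s + Real.exp s * (E s + N s / D s)) s :=
      fun s => (Real.hasDerivAt_exp s).mul (hψd s)
    have hfdiff : Differentiable ℝ f := fun s => (hfd s).differentiableAt
    have hmono : MonotoneOn f (Set.Ici (0 : ℝ)) := by
      apply monotoneOn_of_deriv_nonneg (convex_Ici 0) hfdiff.continuous.continuousOn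
        hfdiff.differentiableOn
      intro s hs
      rw [interior_Ici] at hs
      rw [(hfd s).deriv]
      have h1 := key s (le_of_lt hs)
      nlinarith [Real.exp_pos s]
    have h2 := hmono (Set.self_mem_Ici) (Set.mem_Ici.mpr ht) ht
    have h3 : f 0 = ψ 0 := by simp [hfdef]
    have h4 : 0 ≤ Real.exp t * ψ t := by
      have : f 0 ≤ f t := h2
      rw [h3] at this
      calc (0:ℝ) ≤ ψ 0 := hψ0
        _ ≤ f t := this
    nlinarith [Real.exp_pos t]
  -- Gronwall step 2: D - (r+rb) ≥ 0 on [0,∞)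
  have hbnn : ∀ t, 0 ≤ t → D t ≥ r + rb := by
    intro t ht
    set g : ℝ → ℝ := fun s => Real.exp s * (D s - (r + rb)) with hgdef
    have hgd : ∀ s, HasDerivAt g (Real.exp s * (D s - (r + rb)) + Real.exp s * (N s / D s)) s :=
      fun s => (Real.hasDerivAt_exp s).mul ((hDd s).sub_const (r + rb))
    have hgdiff : Differentiable ℝ g := fun s => (hgd s).differentiableAt
    have hmono : MonotoneOn g (Set.Ici (0 : ℝ)) := by
      apply monotoneOn_of_deriv_nonneg (convex_Ici 0) hgdiff.continuous.continuousOn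
        hgdiff.differentiableOn
      intro s hs
      rw [interior_Ici] at hs
      rw [(hgd s).deriv]
      have h1 := hψnn s (le_of_lt hs)
      have h2 : Real.exp s * (D s - (r + rb)) + Real.exp s * (N s / D s)
          = Real.exp s * ψ s := by
        simp only [hψdef]; ring
      rw [h2]
      exact mul_nonneg (Real.exp_pos s).le h1
    have h2 := hmono (Set.self_mem_Ici) (Set.mem_Ici.mpr ht) ht
    have h3 : g 0 = D 0 - (r + rb) := by simp [hgdef]
    have h4 : 0 ≤ g t := by
      have : g 0 ≤ g t := h2
      rw [h3] at this
      linarith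
    have h5 : g t = Real.exp t * (D t - (r + rb)) := rfl
    nlinarith [Real.exp_pos t, h5 ▸ h4]
  refine ⟨hbnn, ?_⟩
  -- geometric consequence
  intro t ht px py hp
  have hDt := hbnn t ht
  set z₁ : ℂ := ⟨px - x₀, py - y₀⟩ with hz1
  set z₂ : ℂ := ⟨X t - x₀, Y t - y₀⟩ with hz2
  set z₃ : ℂ := ⟨px - X t, py - Y t⟩ with hz3
  have hsum : z₂ = z₁ - z₃ := by
    apply Complex.ext <;> simp [hz1, hz2, hz3] <;> ring
  have habs2 : ‖z₂‖ = D t := by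
    rw [Complex.norm_def, Complex.normSq_apply, hD t]
    congr 1
    simp [hz2]; ring
  have habs3 : ‖z₃‖ = Real.sqrt ((px - X t) ^ 2 + (py - Y t) ^ 2) := by
    rw [Complex.norm_def, Complex.normSq_apply]
    congr 1
    simp [hz3]; ring
  have habs1 : ‖z₁‖ = Real.sqrt ((px - x₀) ^ 2 + (py - y₀) ^ 2) := by
    rw [Complex.norm_def, Complex.normSq_apply]
    congr 1
    simp [hz1]; ring
  have htri : ‖z₂‖ ≤ ‖z₁‖ + ‖z₃‖ := by
    rw [hsum]
    exact (norm_sub_le z₁ z₃)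
  rw [habs2, habs1, habs3] at *
  linarith
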